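/- arXiv:1312.1329 — 2 statements merged into one kernel-verified Lean document; each statement's English description precedes it below -/
import Mathlib

section
/- For unit vectors ψ and φ in a finite-dimensional complex Hilbert space, Φ(|ψ⟩⟨ψ|, |φ⟩⟨φ|) ≤ 1, with equality if and only if |⟨ψ|φ⟩|² = 1/2. -/
open Matrix ComplexOrder

/-- The incompatibility measure Φ(ρ,σ) := 2‖[ρ,σ]‖²_HS = 2·Tr([ρ,σ]†[ρ,σ]). -/
noncomputable def Phi {n : ℕ} (ρ σ : Matrix (Fin n) (Fin n) ℂ) : ℝ :=
  2 * (((ρ * σ - σ * ρ)ᴴ * (ρ * σ - σ * ρ)).trace).re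

/-- The rank-one projection |ψ⟩⟨ψ| associated to a (unit) vector ψ. -/
def pureState {n : ℕ} (ψ : Fin n → ℂ) : Matrix (Fin n) (Fin n) ℂ :=
  vecMulVec ψ (star ψ)

lemma vmv_mul_vmv {n : ℕ} (a b c d : Fin n → ℂ) :
    vecMulVec a b * vecMulVec c d = (b ⬝ᵥ c) • vecMulVec a d := by
  ext i j
  simp only [mul_apply, vecMulVec_apply, Matrix.smul_apply, dotProduct, smul_eq_mul,
    Finset.sum_mul]
  exact Finset.sum_congr rfl fun k _ => by ring

lemma trace_vmv {n : ℕ} (a b : Fin n → ℂ) :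
    (vecMulVec a b).trace = b ⬝ᵥ a := by
  simp [trace, diag, vecMulVec_apply, dotProduct, mul_comm]

lemma conjTranspose_vmv {n : ℕ} (a b : Fin n → ℂ) :
    (vecMulVec a b)ᴴ = vecMulVec (star b) (star a) := by
  ext i j
  simp [conjTranspose_apply, vecMulVec_apply, mul_comm]

theorem phi_pure_le_one_iff {n : ℕ} (ψ φ : Fin n → ℂ)
    (hψ : star ψ ⬝ᵥ ψ = 1) (hφ : star φ ⬝ᵥ φ = 1) :
    Phi (pureState ψ) (pureState φ) ≤ 1 ∧
      (Phi (pureState ψ) (pureState φ) = 1 ↔ ‖star ψ ⬝ᵥ φ‖ ^ 2 = 1 / 2) := by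
  set c : ℂ := star ψ ⬝ᵥ φ with hc
  have hc' : star φ ⬝ᵥ ψ = star c := by
    rw [hc]
    simp [dotProduct, Finset.sum_comm, mul_comm]
  -- key trace computation
  have key : Phi (pureState ψ) (pureState φ) = 4 * ‖c‖ ^ 2 - 4 * (‖c‖ ^ 2) ^ 2 := by
    unfold Phi pureState
    rw [vmv_mul_vmv, vmv_mul_vmv, hc', ← hc]
    have e1 : ((c • vecMulVec ψ (star φ) - star c • vecMulVec φ (star ψ))ᴴ *
        (c • vecMulVec ψ (star φ) - star c • vecMulVec φ (star ψ))).trace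
        = 2 * (c * star c) - 2 * (c * star c) ^ 2 := by
      rw [conjTranspose_sub, conjTranspose_smul, conjTranspose_smul,
        conjTranspose_vmv, conjTranspose_vmv]
      simp only [star_star, sub_mul, mul_sub, smul_mul_assoc, mul_smul_comm,
        vmv_mul_vmv, trace_sub, trace_smul, smul_smul, ← hc, hc', hψ, hφ,
        one_smul, trace_vmv, smul_eq_mul]
      ring
    rw [e1]
    have : c * star c = ((‖c‖ ^ 2 : ℝ) : ℂ) := by
      rw [show (star c) = (starRingEnd ℂ) c from rfl, Complex.mul_conj]
      norm_cast
      exact (Complex.sq_norm c).symm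
    rw [this]
    push_cast
    simp only [← Complex.ofReal_pow, Complex.sub_re, Complex.mul_re, Complex.ofReal_re]
    simp [← Complex.ofReal_pow]
    ring
  rw [key]
  set t : ℝ := ‖c‖ ^ 2 with ht
  constructor
  · nlinarith [sq_nonneg (2 * t - 1)]
  · constructor
    · intro h
      nlinarith [sq_nonneg (2 * t - 1)]
    · intro h
      rw [h]; ring
end

section
/- In any complex Hilbert space of dimension at least 2, the maximum of Φ over pairs of density matrices equals 1: there exist density matrices ρ and σ (in fact pure states) with Φ(ρ,σ) = 1, and Φ(ρ,σ) ≤ 1 for all density matrices ρ, σ. -/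
open Matrix ComplexOrder

/-- A density matrix: positive semidefinite with unit trace. -/
def IsDensityMatrix {n : ℕ} (ρ : Matrix (Fin n) (Fin n) ℂ) : Prop :=
  ρ.PosSemidef ∧ ρ.trace = 1

/-! ### Auxiliary lemmas -/

lemma psd2_entry {N : Matrix (Fin 2) (Fin 2) ℂ} (hN : N.PosSemidef) :
    Complex.normSq (N 0 1) ≤ (N 0 0).re * (N 1 1).re := by
  set a := N 0 1 with ha
  have h00 : 0 ≤ (N 0 0).re := by
    have := hN.re_dotProduct_nonneg (Pi.single 0 1)
    simpa [dotProduct, mulVec, Fin.sum_univ_two] using this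
  have h11 : 0 ≤ (N 1 1).re := by
    have := hN.re_dotProduct_nonneg (Pi.single 1 1)
    simpa [dotProduct, mulVec, Fin.sum_univ_two] using this
  have hq : ∀ t : ℝ, 0 ≤ (N 0 0).re * (t * t) + (-(2 * Complex.normSq a)) * t
      + Complex.normSq a * (N 1 1).re := by
    intro t
    have h := hN.re_dotProduct_nonneg ![(t:ℂ), -(starRingEnd ℂ) a]
    have h10 : N 1 0 = (starRingEnd ℂ) a := (hN.isHermitian.apply 1 0).symm
    simp only [dotProduct, mulVec, Fin.sum_univ_two, Matrix.cons_val_zero,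
      Matrix.cons_val_one, Matrix.head_cons, h10, RCLike.star_def, Pi.star_apply,
      RCLike.re_to_complex] at h
    convert h using 1
    simp only [Complex.add_re, Complex.mul_re, Complex.neg_re, Complex.neg_im,
      Complex.conj_re, Complex.conj_im, Complex.ofReal_re, Complex.ofReal_im,
      Complex.add_im, Complex.mul_im, Complex.normSq_apply, map_neg, Pi.star_apply,
      RCLike.star_def, RCLike.re_to_complex, Matrix.cons_val_zero, Matrix.cons_val_one,
      Matrix.head_cons]
    ring
  have hd := discrim_le_zero hq
  rw [discrim] at hd
  nlinarith [Complex.normSq_nonneg a, mul_nonneg h00 h11,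
    sq_nonneg (Complex.normSq a - (N 0 0).re * (N 1 1).re)]

lemma psd_entry {n : ℕ} {M : Matrix (Fin n) (Fin n) ℂ} (hM : M.PosSemidef) (i j : Fin n) :
    Complex.normSq (M i j) ≤ (M i i).re * (M j j).re := by
  have h := psd2_entry (hM.submatrix ![i, j])
  simpa using h

lemma trace_comm_diag {n : ℕ} (p : Fin n → ℝ) (σ : Matrix (Fin n) (Fin n) ℂ) :
    (((diagonal (fun i => (p i : ℂ)) * σ - σ * diagonal (fun i => (p i : ℂ)))ᴴ *
      (diagonal (fun i => (p i : ℂ)) * σ - σ * diagonal (fun i => (p i : ℂ)))).trace).re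
      = ∑ j, ∑ i, (p i - p j)^2 * Complex.normSq (σ i j) := by
  set D := diagonal (fun i => (p i : ℂ)) with hD
  set X := D * σ - σ * D with hX
  have hXe : ∀ i j, X i j = ((p i - p j : ℝ) : ℂ) * σ i j := by
    intro i j
    simp [hX, hD, Matrix.sub_apply, Matrix.diagonal_mul, Matrix.mul_diagonal]
    ring
  have : (Xᴴ * X).trace = ((∑ j, ∑ i, (p i - p j)^2 * Complex.normSq (σ i j) : ℝ) : ℂ) := by
    rw [Matrix.trace]
    push_cast
    refine Finset.sum_congr rfl fun j _ => ?_
    rw [Matrix.diag_apply, Matrix.mul_apply]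
    refine Finset.sum_congr rfl fun i _ => ?_
    rw [Matrix.conjTranspose_apply, hXe i j]
    simp only [Complex.star_def, _root_.map_mul, map_sub, Complex.conj_ofReal]
    rw [← Complex.mul_conj (σ i j)]
    push_cast
    ring
  rw [this, Complex.ofReal_re]

lemma var_bound {n : ℕ} (p q : Fin n → ℝ) (hp0 : ∀ i, 0 ≤ p i) (hp1 : ∀ i, p i ≤ 1)
    (hq0 : ∀ i, 0 ≤ q i) (hq1 : ∑ i, q i = 1) :
    ∑ j, ∑ i, (p i - p j)^2 * (q i * q j) ≤ 1/2 := by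
  set S1 := ∑ i, q i * p i with hS1
  set S2 := ∑ i, q i * p i^2 with hS2
  have inner : ∀ j, ∑ i, (p i - p j)^2 * (q i * q j)
      = S2 * q j - 2*S1*(q j * p j) + q j * p j^2 := by
    intro j
    have h1 : ∑ i, (p i - p j)^2 * (q i * q j)
        = ∑ i, ((q i * p i^2) * q j - (q i * p i) * (2 * (p j * q j)) + q i * (p j^2 * q j)) :=
      Finset.sum_congr rfl fun i _ => by ring
    rw [h1, Finset.sum_add_distrib, Finset.sum_sub_distrib, ← Finset.sum_mul, ← Finset.sum_mul,
      ← Finset.sum_mul, hq1, ← hS1, ← hS2]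
    ring
  have key : ∑ j, ∑ i, (p i - p j)^2 * (q i * q j) = 2*S2 - 2*S1^2 := by
    rw [Finset.sum_congr rfl fun j _ => inner j, Finset.sum_add_distrib,
      Finset.sum_sub_distrib, ← Finset.mul_sum, ← Finset.mul_sum, hq1]
    have h3 : ∑ j, q j * p j ^ 2 = S2 := Finset.sum_congr rfl fun j _ => rfl
    rw [h3, ← hS1]
    ring
  have hS2S1 : S2 ≤ S1 := Finset.sum_le_sum fun i _ => by
    nlinarith [mul_nonneg (hq0 i) (mul_nonneg (hp0 i) (sub_nonneg.2 (hp1 i)))]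
  have hS10 : 0 ≤ S1 := Finset.sum_nonneg fun i _ => mul_nonneg (hq0 i) (hp0 i)
  have hS11 : S1 ≤ 1 := by
    rw [← hq1]
    exact Finset.sum_le_sum fun i _ => by nlinarith [mul_nonneg (hq0 i) (sub_nonneg.2 (hp1 i))]
  rw [key]; nlinarith [sq_nonneg (S1 - 1/2)]

lemma phi_le_one {n : ℕ} (ρ σ : Matrix (Fin n) (Fin n) ℂ)
    (hρ : IsDensityMatrix ρ) (hσ : IsDensityMatrix σ) : Phi ρ σ ≤ 1 := by
  classical
  obtain ⟨hρp, hρt⟩ := hρ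
  obtain ⟨hσp, hσt⟩ := hσ
  have hH := hρp.isHermitian
  set V : Matrix (Fin n) (Fin n) ℂ := (hH.eigenvectorUnitary : Matrix (Fin n) (Fin n) ℂ) with hV
  set p := hH.eigenvalues with hp
  set D : Matrix (Fin n) (Fin n) ℂ := diagonal (fun i => (p i : ℂ)) with hDdef
  have hsV : star V * V = 1 := (Unitary.mem_iff.mp hH.eigenvectorUnitary.2).1
  have hVs : V * star V = 1 := (Unitary.mem_iff.mp hH.eigenvectorUnitary.2).2
  have hspec : ρ = V * D * star V := by
    have := hH.spectral_theorem
    rw [Unitary.conjStarAlgAut_apply] at this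
    exact this
  set σ' : Matrix (Fin n) (Fin n) ℂ := star V * σ * V with hσ'
  have hσback : σ = V * σ' * star V := by
    rw [hσ']
    calc σ = (V * star V) * σ * (V * star V) := by rw [hVs]; simp [Matrix.mul_assoc]
    _ = V * (star V * σ * V) * star V := by simp only [Matrix.mul_assoc]
  have hcomm : ρ * σ - σ * ρ = V * (D * σ' - σ' * D) * star V := by
    rw [hspec, hσback]
    simp only [Matrix.mul_sub, Matrix.sub_mul, Matrix.mul_assoc]
    rw [show star V * (V * (σ' * star V)) = σ' * star V by
      rw [← Matrix.mul_assoc, hsV, Matrix.one_mul]]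
    rw [show star V * (V * (D * star V)) = D * star V by
      rw [← Matrix.mul_assoc, hsV, Matrix.one_mul]]
  set X : Matrix (Fin n) (Fin n) ℂ := D * σ' - σ' * D with hXdef
  have h1 : (V * X * star V)ᴴ = V * Xᴴ * star V := by
    simp [Matrix.conjTranspose_mul, Matrix.mul_assoc, Matrix.star_eq_conjTranspose]
  have h2 : (V * Xᴴ * star V) * (V * X * star V) = V * (Xᴴ * X) * star V := by
    simp only [Matrix.mul_assoc]
    rw [show star V * (V * (X * star V)) = X * star V by
      rw [← Matrix.mul_assoc, hsV, Matrix.one_mul]]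
  have htr : ((ρ * σ - σ * ρ)ᴴ * (ρ * σ - σ * ρ)).trace = (Xᴴ * X).trace := by
    rw [hcomm, h1, h2, Matrix.trace_mul_cycle, ← Matrix.mul_assoc, hsV, Matrix.one_mul]
  have hp0 : ∀ i, 0 ≤ p i := fun i => hρp.eigenvalues_nonneg i
  have hpsum : ∑ i, p i = 1 := by
    have h1 : ρ.trace = ∑ i, (p i : ℂ) := by
      rw [hspec, Matrix.trace_mul_cycle, hsV, Matrix.one_mul, hDdef, Matrix.trace_diagonal]
    rw [hρt] at h1
    have := congrArg Complex.re h1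
    simpa using this.symm
  have hp1 : ∀ i, p i ≤ 1 := by
    intro i
    rw [← hpsum]
    exact Finset.single_le_sum (fun j _ => hp0 j) (Finset.mem_univ i)
  have hσ'p : σ'.PosSemidef := by
    have := hσp.conjTranspose_mul_mul_same V
    simpa [hσ', Matrix.star_eq_conjTranspose] using this
  have hσ't : σ'.trace = 1 := by
    rw [hσ', Matrix.trace_mul_cycle, hVs, Matrix.one_mul, hσt]
  set q : Fin n → ℝ := fun i => (σ' i i).re with hq
  have hq0 : ∀ i, 0 ≤ q i := by
    intro i
    have := hσ'p.re_dotProduct_nonneg (Pi.single i 1)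
    simpa [dotProduct, mulVec, Pi.single_apply, Finset.sum_ite_eq] using this
  have hqsum : ∑ i, q i = 1 := by
    have := congrArg Complex.re hσ't
    rw [Matrix.trace] at this
    simpa [Complex.re_sum, Matrix.diag_apply] using this
  rw [Phi, htr, trace_comm_diag p σ']
  have hstep : ∑ j, ∑ i, (p i - p j)^2 * Complex.normSq (σ' i j)
      ≤ ∑ j, ∑ i, (p i - p j)^2 * (q i * q j) := by
    refine Finset.sum_le_sum fun j _ => Finset.sum_le_sum fun i _ => ?_
    exact mul_le_mul_of_nonneg_left (psd_entry hσ'p i j) (sq_nonneg _)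
  have := var_bound p q hp0 hp1 hq0 hqsum
  linarith

lemma pureState_posSemidef {n : ℕ} (ψ : Fin n → ℂ) : (pureState ψ).PosSemidef := by
  have h : pureState ψ = replicateCol (Fin 1) ψ * (replicateCol (Fin 1) ψ)ᴴ := by
    rw [conjTranspose_replicateCol]
    exact vecMulVec_eq (Fin 1) ψ (star ψ)
  rw [h]
  exact posSemidef_self_mul_conjTranspose _

lemma pureState_trace {n : ℕ} {ψ : Fin n → ℂ} (h : star ψ ⬝ᵥ ψ = 1) :
    (pureState ψ).trace = 1 := by
  rw [← h, Matrix.trace, dotProduct]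
  exact Finset.sum_congr rfl fun i _ => by
    simp [pureState, vecMulVec, Matrix.diag_apply, mul_comm]

lemma stdBasis_conjT {n : ℕ} (a b : Fin n) :
    (single a b (1:ℂ))ᴴ = single b a 1 := by
  ext i j
  simp [Matrix.conjTranspose_apply, Matrix.single, apply_ite (star : ℂ → ℂ), and_comm]

lemma trace_stdBasis {n : ℕ} (a : Fin n) (v : ℂ) :
    (single a a v).trace = v := by
  have : (single a a v).diag = Pi.single a v := Matrix.diag_single_same a v
  rw [Matrix.trace, this, Finset.sum_pi_single']
  simp

lemma pure_single {n : ℕ} (i0 : Fin n) :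
    pureState (fun i => if i = i0 then (1:ℂ) else 0) = single i0 i0 1 := by
  ext i j
  simp only [pureState, vecMulVec, Matrix.of_apply, Pi.star_apply, Matrix.single]
  by_cases h1 : i = i0 <;> by_cases h2 : j = i0 <;> simp_all [eq_comm] <;> (try (split_ifs <;> simp_all))

lemma pure_two {n : ℕ} {i0 i1 : Fin n} (hne : i0 ≠ i1) (c : ℝ) :
    pureState (fun i => if i = i0 then (c:ℂ) else if i = i1 then (c:ℂ) else 0)
      = ((c:ℂ)*(c:ℂ)) • (single i0 i0 1 + single i0 i1 1
          + single i1 i0 1 + single i1 i1 1) := by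
  ext i j
  simp only [pureState, vecMulVec, Matrix.of_apply, Pi.star_apply, Matrix.smul_apply,
    Matrix.add_apply, Matrix.single, smul_eq_mul]
  rcases eq_or_ne i i0 with h1 | h1 <;> rcases eq_or_ne i i1 with h2 | h2 <;>
    rcases eq_or_ne j i0 with h3 | h3 <;> rcases eq_or_ne j i1 with h4 | h4 <;>
    first
      | exact absurd (h1.symm.trans h2) hne
      | exact absurd (h3.symm.trans h4) hne
      | (simp_all [Complex.conj_ofReal, Ne.symm hne]; try ring; try (split_ifs <;> simp_all))

lemma key_ex {n : ℕ} (hn : 2 ≤ n) :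
    ∃ ψ φ : Fin n → ℂ, star ψ ⬝ᵥ ψ = 1 ∧ star φ ⬝ᵥ φ = 1 ∧
      Phi (pureState ψ) (pureState φ) = 1 := by
  classical
  set i0 : Fin n := ⟨0, by omega⟩ with hi0
  set i1 : Fin n := ⟨1, by omega⟩ with hi1
  have hne : i0 ≠ i1 := by simp [hi0, hi1, Fin.ext_iff]
  set c : ℝ := (Real.sqrt 2)⁻¹ with hc
  have hc2 : c^2 = 1/2 := by
    rw [hc, ← one_div, div_pow, one_pow, Real.sq_sqrt (by norm_num : (0:ℝ) ≤ 2)]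
  set ψ : Fin n → ℂ := fun i => if i = i0 then 1 else 0 with hψ
  set φ : Fin n → ℂ := fun i => if i = i0 then (c:ℂ) else if i = i1 then (c:ℂ) else 0 with hφ
  refine ⟨ψ, φ, ?_, ?_, ?_⟩
  · rw [dotProduct]
    simp [hψ, apply_ite (star : ℂ → ℂ), Finset.sum_ite_eq']
  · rw [dotProduct]
    have : ∀ i, star φ i * φ i
        = (if i = i0 then ((c^2 : ℝ) : ℂ) else 0) + (if i = i1 then ((c^2 : ℝ) : ℂ) else 0) := by
      intro i
      rw [hφ]
      split_ifs with h1 h2 <;>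
        simp_all [hne, sq, Complex.conj_ofReal, ← Complex.ofReal_mul, Real.mul_self_sqrt] <;>
        (rw [← mul_inv, ← Complex.ofReal_mul, Real.mul_self_sqrt (by norm_num)]; norm_num)
    rw [Finset.sum_congr rfl fun i _ => this i, Finset.sum_add_distrib,
      Finset.sum_ite_eq' Finset.univ i0, Finset.sum_ite_eq' Finset.univ i1]
    simp [hc2]
    norm_num
  · have hρ : pureState ψ = single i0 i0 (1:ℂ) := pure_single i0
    have hσm : pureState φ = ((c:ℂ)*(c:ℂ)) • (single i0 i0 1 + single i0 i1 1
        + single i1 i0 1 + single i1 i1 1) := pure_two hne c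
    have hr : (c:ℂ)*(c:ℂ) = (2:ℂ)⁻¹ := by
      rw [← Complex.ofReal_mul, show c*c = (2:ℝ)⁻¹ by nlinarith [hc2]]
      norm_num
    have hC : pureState ψ * pureState φ - pureState φ * pureState ψ
        = (2:ℂ)⁻¹ • (single i0 i1 1 - single i1 i0 1) := by
      rw [hρ, hσm, hr, mul_smul_comm, smul_mul_assoc, ← smul_sub]
      congr 1
      simp only [Matrix.mul_add, Matrix.add_mul, single_mul_single_same,
        single_mul_single_of_ne _ _ _ _ hne, single_mul_single_of_ne _ _ _ _ (Ne.symm hne), one_mul]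
      abel
    have hCt : ((pureState ψ * pureState φ - pureState φ * pureState ψ)ᴴ
        * (pureState ψ * pureState φ - pureState φ * pureState ψ)).trace = (2:ℂ)⁻¹ := by
      rw [hC, Matrix.conjTranspose_smul, Matrix.conjTranspose_sub, stdBasis_conjT,
        stdBasis_conjT]
      rw [smul_mul_assoc, mul_smul_comm, smul_smul]
      have hmul : (single i1 i0 (1:ℂ) - single i0 i1 1)
          * (single i0 i1 1 - single i1 i0 1)
          = single i1 i1 1 + single i0 i0 1 := by
        simp only [Matrix.sub_mul, Matrix.mul_sub, single_mul_single_same,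
          single_mul_single_of_ne _ _ _ _ hne, single_mul_single_of_ne _ _ _ _ (Ne.symm hne),
          one_mul]
        abel
      rw [hmul, Matrix.trace_smul, Matrix.trace_add, trace_stdBasis, trace_stdBasis]
      simp
      norm_num
    show 2 * (((pureState ψ * pureState φ - pureState φ * pureState ψ)ᴴ
        * (pureState ψ * pureState φ - pureState φ * pureState ψ)).trace).re = 1
    rw [hCt]
    norm_num

theorem phi_max_is_one {n : ℕ} (hn : 2 ≤ n) :
    (∃ ρ σ : Matrix (Fin n) (Fin n) ℂ,
        IsDensityMatrix ρ ∧ IsDensityMatrix σ ∧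
        (∃ ψ : Fin n → ℂ, star ψ ⬝ᵥ ψ = 1 ∧ ρ = pureState ψ) ∧
        (∃ φ : Fin n → ℂ, star φ ⬝ᵥ φ = 1 ∧ σ = pureState φ) ∧
        Phi ρ σ = 1) ∧
    ∀ ρ σ : Matrix (Fin n) (Fin n) ℂ,
      IsDensityMatrix ρ → IsDensityMatrix σ → Phi ρ σ ≤ 1 := by
  constructor
  · obtain ⟨ψ, φ, hψ, hφ, hPhi⟩ := key_ex hn
    exact ⟨pureState ψ, pureState φ,
      ⟨pureState_posSemidef ψ, pureState_trace hψ⟩,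
      ⟨pureState_posSemidef φ, pureState_trace hφ⟩,
      ⟨ψ, hψ, rfl⟩, ⟨φ, hφ, rfl⟩, hPhi⟩
  · exact fun ρ σ hρ hσ => phi_le_one ρ σ hρ hσ
end
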